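/- Let x ∈ X define a common facet of two neighboring direction cones C and C', with {0} ∪ X in general position. If r moves from the interior of C to the interior of C' through the relative interior of the common facet contained in H_x, then x is the unique point of X whose inner product with r changes sign; all other points of X maintain the sign of their inner product with r. -/

import Mathlib

open Finset
open scoped Classical

theorem stmt11 {d : ℕ} (X : Finset (EuclideanSpace ℝ (Fin d)))
    (x : EuclideanSpace ℝ (Fin d)) (hx : x ∈ X)
    (v : EuclideanSpace ℝ (Fin d)) (hv : v ≠ 0)
    (hxv : (inner ℝ x v : ℝ) = 0)
    (hgen : ∀ y ∈ X, y ≠ x → (inner ℝ y v : ℝ) ≠ 0) :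
    ∃ δ > (0 : ℝ), ∀ r₁ r₂ : EuclideanSpace ℝ (Fin d),
      ‖r₁ - v‖ < δ → ‖r₂ - v‖ < δ →
      (0 : ℝ) < inner ℝ x r₁ → (inner ℝ x r₂ : ℝ) < 0 →
      ∀ y ∈ X, y ≠ x → ((0 : ℝ) < inner ℝ y r₁ ↔ (0 : ℝ) < inner ℝ y r₂) := by
  classical
  set S := X.erase x with hS
  -- every y in S has positive norm and nonzero inner ℝ product with v
  have hkey : ∀ y ∈ S, (inner ℝ y v : ℝ) ≠ 0 ∧ (0:ℝ) < ‖y‖ := by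
    intro y hy
    have hyX := Finset.mem_of_mem_erase hy
    have hyx := Finset.ne_of_mem_erase hy
    have h1 := hgen y hyX hyx
    refine ⟨h1, ?_⟩
    have : y ≠ 0 := by
      rintro rfl
      exact h1 (by simp)
    simpa [norm_pos_iff] using this
  by_cases hne : S.Nonempty
  · refine ⟨min 1 (S.inf' hne fun y => |(inner ℝ y v : ℝ)| / ‖y‖), ?_, ?_⟩
    · apply lt_min one_pos
      rw [Finset.lt_inf'_iff]
      intro y hy
      obtain ⟨h1, h2⟩ := hkey y hy
      exact div_pos (abs_pos.mpr h1) h2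
    · intro r₁ r₂ hr₁ hr₂ _ _ y hyX hyx
      have hy : y ∈ S := Finset.mem_erase.mpr ⟨hyx, hyX⟩
      obtain ⟨h1, h2⟩ := hkey y hy
      have sign : ∀ r : EuclideanSpace ℝ (Fin d), ‖r - v‖ < min 1 (S.inf' hne fun y => |(inner ℝ y v : ℝ)| / ‖y‖) →
          ((0:ℝ) < inner ℝ y r ↔ (0:ℝ) < (inner ℝ y v : ℝ)) := by
        intro r hr
        have hle : min 1 (S.inf' hne fun y => |(inner ℝ y v : ℝ)| / ‖y‖) ≤ |(inner ℝ y v : ℝ)| / ‖y‖ :=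
          le_trans (min_le_right _ _) (Finset.inf'_le _ hy)
        have hdiff : |(inner ℝ y r : ℝ) - inner ℝ y v| < |(inner ℝ y v : ℝ)| := by
          have h3 : |(inner ℝ y r : ℝ) - inner ℝ y v| = |(inner ℝ y (r - v) : ℝ)| := by
            rw [inner_sub_right]
          rw [h3]
          calc |(inner ℝ y (r - v) : ℝ)| ≤ ‖y‖ * ‖r - v‖ := abs_real_inner_le_norm y (r - v)
            _ < ‖y‖ * (|(inner ℝ y v : ℝ)| / ‖y‖) := by
                apply mul_lt_mul_of_pos_left (lt_of_lt_of_le hr hle) h2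
            _ = |(inner ℝ y v : ℝ)| := by field_simp
        rcases lt_or_gt_of_ne h1 with hneg | hpos
        · constructor
          · intro h
            rw [abs_sub_lt_iff] at hdiff
            rw [abs_of_neg hneg] at hdiff
            linarith [hdiff.1]
          · intro h; linarith
        · constructor
          · intro _; exact hpos
          · intro _
            rw [abs_sub_lt_iff, abs_of_pos hpos] at hdiff
            linarith [hdiff.2]
      rw [sign r₁ hr₁, sign r₂ hr₂]
  · refine ⟨1, one_pos, ?_⟩
    intro r₁ r₂ _ _ _ _ y hyX hyx
    have : S = ∅ := Finset.not_nonempty_iff_eq_empty.mp hne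
    exact absurd (Finset.mem_erase.mpr ⟨hyx, hyX⟩ : y ∈ S) (by rw [← hS, this]; exact Finset.notMem_empty y)
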